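/- Let G(0),...,G(B−1) be undirected graphs on {1,...,n} with self-loops at every node, whose union is connected, and such that node i has degree either d_i or 1 in each G(t). Let A(t) be the equal-neighbor matrices and x(t+1) = A(t)x(t). Let i[·] sort x(0) nondecreasingly. Then V(x(B)) ≤ V(x(0)) − (1/2) Σ_{l=1}^{n−1} (x_{i[l+1]}(0) − x_{i[l]}(0))^2, where V(y) = Σ_i d_i y_i^2. -/

import Mathlib

lemma aux_quad_id {ι : Type*} (S : Finset ι) (y : ι → ℝ) :
    (S.card : ℝ) * ∑ p ∈ S, y p ^ 2 - (∑ p ∈ S, y p) ^ 2 =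
      (1 / 2) * ∑ p ∈ S, ∑ q ∈ S, (y p - y q) ^ 2 := by
  have h : ∀ p q : ι, (y p - y q) ^ 2 = y p ^ 2 + y q ^ 2 - 2 * (y p * y q) :=
    fun p q => by ring
  have hsq : (∑ p ∈ S, y p) ^ 2 = ∑ p ∈ S, ∑ q ∈ S, y p * y q := by
    rw [sq, Finset.sum_mul_sum]
  have h2 : ∑ p ∈ S, ∑ q ∈ S, 2 * (y p * y q) = 2 * ∑ p ∈ S, ∑ q ∈ S, y p * y q := by
    simp [Finset.mul_sum]
  have h3 : ∑ p ∈ S, ∑ q ∈ S, y q ^ 2 = (S.card : ℝ) * ∑ q ∈ S, y q ^ 2 := by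
    rw [Finset.sum_const, nsmul_eq_mul]
  simp only [h, Finset.sum_add_distrib, Finset.sum_sub_distrib, Finset.sum_const,
    nsmul_eq_mul]
  rw [h2, hsq, ← Finset.mul_sum]
  ring

lemma aux_quad_nonneg {ι : Type*} (S : Finset ι) (y : ι → ℝ) :
    0 ≤ (S.card : ℝ) * ∑ p ∈ S, y p ^ 2 - (∑ p ∈ S, y p) ^ 2 := by
  rw [aux_quad_id]; positivity

lemma aux_two_point {ι : Type*} [DecidableEq ι] (S : Finset ι) (y : ι → ℝ) {u v : ι}
    (hu : u ∈ S) (hv : v ∈ S) (huv : u ≠ v) :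
    (1 / 2) * (y v - y u) ^ 2 ≤
      (1 / (S.card : ℝ)) * ((S.card : ℝ) * ∑ p ∈ S, y p ^ 2 - (∑ p ∈ S, y p) ^ 2) := by
  have hcard : 0 < S.card := Finset.card_pos.2 ⟨u, hu⟩
  have hc : (0:ℝ) < (S.card : ℝ) := by exact_mod_cast hcard
  set m : ℝ := (∑ p ∈ S, y p) / S.card with hm
  have hzero : ∑ p ∈ S, (y p - m) = 0 := by
    rw [Finset.sum_sub_distrib, Finset.sum_const, nsmul_eq_mul, hm]
    field_simp
    ring
  have hA := aux_quad_id S y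
  have hB := aux_quad_id S (fun p => y p - m)
  simp only [sub_sub_sub_cancel_right] at hB
  rw [hzero] at hB
  have key : (S.card : ℝ) * ∑ p ∈ S, y p ^ 2 - (∑ p ∈ S, y p) ^ 2
      = (S.card : ℝ) * ∑ p ∈ S, (y p - m) ^ 2 := by
    rw [hA, ← hB]; ring
  rw [key]
  have hT : 1 / (S.card:ℝ) * ((S.card:ℝ) * ∑ p ∈ S, (y p - m) ^ 2)
      = ∑ p ∈ S, (y p - m) ^ 2 := by
    field_simp
  rw [hT]
  have hsub : ({u, v} : Finset ι) ⊆ S := by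
    intro z hz; simp at hz; rcases hz with rfl | rfl <;> assumption
  have h1 : (y u - m) ^ 2 + (y v - m) ^ 2 ≤ ∑ p ∈ S, (y p - m) ^ 2 := by
    have := Finset.sum_le_sum_of_subset_of_nonneg hsub
      (fun i _ _ => sq_nonneg (y i - m))
    rwa [Finset.sum_pair huv] at this
  nlinarith [sq_nonneg (y u + y v - 2 * m)]

lemma aux_telescope {n : ℕ} (s : Fin (n+1) → ℝ) (a b : Fin n) (hab : a ≤ b) :
    ∑ l ∈ Finset.Icc a b, (s l.succ - s l.castSucc) = s b.succ - s a.castSucc := by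
  classical
  set F : ℕ → ℝ := fun k => if h : k ≤ n then s ⟨k, Nat.lt_succ_of_le h⟩ else 0 with hF
  have hFk : ∀ (l : Fin n), s l.succ - s l.castSucc = F ((l : ℕ) + 1) - F (l : ℕ) := by
    intro l
    have h1 : (l : ℕ) + 1 ≤ n := l.2
    have h2 : (l : ℕ) ≤ n := le_of_lt l.2
    simp only [hF, dif_pos h1, dif_pos h2]
    congr 1
  have hmap : ∑ l ∈ Finset.Icc a b, (s l.succ - s l.castSucc)
      = ∑ k ∈ Finset.Icc (a : ℕ) (b : ℕ), (F (k+1) - F k) := by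
    rw [← Fin.map_valEmbedding_Icc, Finset.sum_map]
    exact Finset.sum_congr rfl fun l _ => hFk l
  rw [hmap, ← Finset.Ico_add_one_right_eq_Icc, Finset.sum_Ico_eq_sub _ (show (a : ℕ) ≤ (b : ℕ) + 1 from Nat.le_succ_of_le hab),
    Finset.sum_range_sub F, Finset.sum_range_sub F]
  have hb1 : (b : ℕ) + 1 ≤ n := b.2
  have ha : (a : ℕ) ≤ n := le_of_lt a.2
  simp only [hF, dif_pos hb1, dif_pos ha]
  have e1 : s (b.succ) = s ⟨(b:ℕ)+1, Nat.lt_succ_of_le hb1⟩ := by congr 1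
  have e2 : s (a.castSucc) = s ⟨(a:ℕ), Nat.lt_succ_of_le ha⟩ := by congr 1
  rw [e1, e2]
  ring



/-- For graphs `G(0),...,G(B-1)` with self-loops on `n+1` nodes whose
union is connected, with degrees `d_i(t) ∈ {1, d_i}`, the equal-neighbor iteration
satisfies `V(x(B)) ≤ V(x(0)) - (1/2) Σ_l (x_{i[l+1]}(0) - x_{i[l]}(0))²`, where `σ`
sorts `x(0)` nondecreasingly and `V(y) = Σ_i d_i y_i²`. -/
theorem block_lyapunov_decrease
    (n B : ℕ) (N : ℕ → Fin (n + 1) → Finset (Fin (n + 1))) (d : Fin (n + 1) → ℕ)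
    (hsym : ∀ t i j, j ∈ N t i ↔ i ∈ N t j)
    (hself : ∀ t i, i ∈ N t i)
    (hdeg : ∀ t i, (N t i).card = d i ∨ (N t i).card = 1)
    (hconn : ∀ i j, Relation.ReflTransGen (fun a b => ∃ t < B, b ∈ N t a) i j)
    (x : ℕ → Fin (n + 1) → ℝ)
    (hx : ∀ t i, x (t + 1) i = (∑ j ∈ N t i, x t j) / ((N t i).card : ℝ))
    (σ : Equiv.Perm (Fin (n + 1)))
    (hσ : Monotone fun l => x 0 (σ l)) :
    ∑ i, (d i : ℝ) * (x B i) ^ 2 ≤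
      ∑ i, (d i : ℝ) * (x 0 i) ^ 2 -
        (1 / 2) * ∑ l : Fin n, (x 0 (σ l.succ) - x 0 (σ l.castSucc)) ^ 2 := by
  classical
  have hcard : ∀ t i, 0 < (N t i).card := fun t i => Finset.card_pos.2 ⟨i, hself t i⟩
  have hcR : ∀ t i, (0:ℝ) < ((N t i).card : ℝ) := fun t i => by exact_mod_cast hcard t i
  -- the per-step dissipation
  set D : ℕ → Fin (n+1) → ℝ := fun t i =>
    ((N t i).card : ℝ) * ∑ j ∈ N t i, (x t j) ^ 2 - (∑ j ∈ N t i, x t j) ^ 2 with hD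
  have hDnn : ∀ t i, 0 ≤ D t i := fun t i => aux_quad_nonneg _ _
  set W : ℕ → ℝ := fun t => ∑ i, (1 / ((N t i).card : ℝ)) * D t i with hW
  have hWnn : ∀ t, 0 ≤ W t := fun t =>
    Finset.sum_nonneg fun i _ => mul_nonneg (by positivity) (hDnn t i)
  -- fixed point of degree-1 nodes
  have hfix : ∀ t i, (N t i).card = 1 → x (t+1) i = x t i := by
    intro t i h1
    obtain ⟨a, ha⟩ := Finset.card_eq_one.1 h1
    have : i = a := by
      have := hself t i; rw [ha] at this; simpa using this
    rw [hx t i, ha, ← this]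
    simp
  -- one-step identity
  have step : ∀ t, ∑ i, (d i : ℝ) * (x (t+1) i) ^ 2
      = ∑ i, (d i : ℝ) * (x t i) ^ 2 - W t := by
    intro t
    have e1 : ∀ i, ((N t i).card : ℝ) * (x (t+1) i) ^ 2
        = ∑ j ∈ N t i, (x t j) ^ 2 - (1 / ((N t i).card : ℝ)) * D t i := by
      intro i
      rw [hx t i, hD]
      have hc := (hcR t i).ne'
      field_simp
      ring
    have e2 : ∀ i, ((d i : ℝ) - ((N t i).card : ℝ)) * (x (t+1) i) ^ 2
        = ((d i : ℝ) - ((N t i).card : ℝ)) * (x t i) ^ 2 := by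
      intro i
      rcases hdeg t i with h | h
      · rw [h]; simp
      · rw [hfix t i h]
    have swap : ∑ i, ∑ j ∈ N t i, (x t j) ^ 2
        = ∑ j, ((N t j).card : ℝ) * (x t j) ^ 2 := by
      calc ∑ i, ∑ j ∈ N t i, (x t j) ^ 2
          = ∑ i, ∑ j, if j ∈ N t i then (x t j) ^ 2 else 0 := by
            refine Finset.sum_congr rfl fun i _ => ?_
            rw [Finset.sum_ite_mem, Finset.univ_inter]
        _ = ∑ j, ∑ i, if j ∈ N t i then (x t j) ^ 2 else 0 := Finset.sum_comm
        _ = ∑ j, ∑ i, if i ∈ N t j then (x t j) ^ 2 else 0 := by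
            refine Finset.sum_congr rfl fun j _ => Finset.sum_congr rfl fun i _ => ?_
            simp only [hsym t i j]
        _ = ∑ j, ((N t j).card : ℝ) * (x t j) ^ 2 := by
            refine Finset.sum_congr rfl fun j _ => ?_
            rw [Finset.sum_ite_mem, Finset.univ_inter, Finset.sum_const, nsmul_eq_mul]
    calc ∑ i, (d i : ℝ) * (x (t+1) i) ^ 2
        = ∑ i, (((N t i).card : ℝ) * (x (t+1) i) ^ 2
            + ((d i : ℝ) - ((N t i).card : ℝ)) * (x (t+1) i) ^ 2) := by
          refine Finset.sum_congr rfl fun i _ => by ring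
      _ = ∑ i, ((∑ j ∈ N t i, (x t j) ^ 2 - (1 / ((N t i).card : ℝ)) * D t i)
            + ((d i : ℝ) - ((N t i).card : ℝ)) * (x t i) ^ 2) := by
          refine Finset.sum_congr rfl fun i _ => by rw [e1 i, e2 i]
      _ = (∑ i, ∑ j ∈ N t i, (x t j) ^ 2) - W t
            + ∑ i, ((d i : ℝ) - ((N t i).card : ℝ)) * (x t i) ^ 2 := by
          rw [Finset.sum_add_distrib, Finset.sum_sub_distrib, hW]
      _ = ∑ i, (d i : ℝ) * (x t i) ^ 2 - W t := by
          rw [swap]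
          have h4 : ∑ i, (((N t i).card : ℝ) * (x t i) ^ 2
              + ((d i : ℝ) - ((N t i).card : ℝ)) * (x t i) ^ 2)
              = ∑ i, (d i : ℝ) * (x t i) ^ 2 :=
            Finset.sum_congr rfl fun i _ => by ring
          rw [Finset.sum_add_distrib] at h4
          linarith [h4]
  -- telescoping
  have tele : ∀ T, ∑ i, (d i : ℝ) * (x T i) ^ 2
      = ∑ i, (d i : ℝ) * (x 0 i) ^ 2 - ∑ t ∈ Finset.range T, W t := by
    intro T
    induction T with
    | zero => simp
    | succ T ih => rw [step T, ih, Finset.sum_range_succ]; ring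
  rw [tele B]
  have main : (1 / 2) * ∑ l : Fin n, (x 0 (σ l.succ) - x 0 (σ l.castSucc)) ^ 2
      ≤ ∑ t ∈ Finset.range B, W t := by
    set low : Fin n → Fin (n+1) → Prop :=
      fun l u => ((σ.symm u : Fin (n+1)) : ℕ) ≤ (l : ℕ) with hlow
    set Cross : ℕ → Fin n → Prop :=
      fun t l => ∃ u v, low l u ∧ ¬ low l v ∧ v ∈ N t u with hCross
    have ex_cross : ∀ l : Fin n, ∃ t, t < B ∧ Cross t l := by
      intro l
      have key : ∀ a b : Fin (n+1),
          Relation.ReflTransGen (fun a b => ∃ t < B, b ∈ N t a) a b →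
          low l a → ¬ low l b → ∃ t, t < B ∧ Cross t l := by
        intro a b h
        induction h with
        | refl => intro ha hb; exact absurd ha hb
        | @tail b' c hab hstep ih =>
          intro ha hb
          by_cases hmid : low l b'
          · obtain ⟨t, ht, hmem⟩ := hstep
            exact ⟨t, ht, b', c, hmid, hb, hmem⟩
          · exact ih ha hmid
      have hstart : low l (σ l.castSucc) := by
        simp [hlow]
      have hend : ¬ low l (σ l.succ) := by
        simp [hlow]
      exact key _ _ (hconn _ _) hstart hend
    set tf : Fin n → ℕ := fun l => Nat.find (ex_cross l) with htf
    have htfB : ∀ l, tf l < B := fun l => (Nat.find_spec (ex_cross l)).1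
    have htfC : ∀ l, Cross (tf l) l := fun l => (Nat.find_spec (ex_cross l)).2
    have htfmin : ∀ l t, t < tf l → ¬ Cross t l := by
      intro l t ht hc
      exact Nat.find_min (ex_cross l) ht ⟨ht.trans (htfB l), hc⟩
    have inv : ∀ l : Fin n, ∀ t, t ≤ tf l →
        (∀ u, low l u → x t u ≤ x 0 (σ l.castSucc)) ∧
        (∀ v, ¬ low l v → x 0 (σ l.succ) ≤ x t v) := by
      intro l t
      induction t with
      | zero =>
        intro _
        constructor
        · intro u hu
          have he : x 0 u = x 0 (σ (σ.symm u)) := by rw [Equiv.apply_symm_apply]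
          rw [he]
          refine hσ ?_
          rw [Fin.le_def]
          simpa [hlow] using hu
        · intro v hv
          have he : x 0 v = x 0 (σ (σ.symm v)) := by rw [Equiv.apply_symm_apply]
          rw [he]
          refine hσ ?_
          rw [Fin.le_def]
          simp only [hlow, not_le] at hv
          simp only [Fin.val_succ]
          omega
      | succ t ih =>
        intro ht
        have ht' : t < tf l := lt_of_lt_of_le (Nat.lt_succ_self t) ht
        obtain ⟨ihl, ihh⟩ := ih (le_of_lt ht')
        have hnc : ¬ Cross t l := htfmin l t ht'
        constructor
        · intro u hu
          rw [hx t u, div_le_iff₀ (hcR t u)]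
          calc ∑ j ∈ N t u, x t j ≤ ∑ _j ∈ N t u, x 0 (σ l.castSucc) := by
                refine Finset.sum_le_sum fun j hj => ?_
                refine ihl j ?_
                by_contra hjlow
                exact hnc ⟨u, j, hu, hjlow, hj⟩
            _ = x 0 (σ l.castSucc) * ((N t u).card : ℝ) := by
                rw [Finset.sum_const, nsmul_eq_mul]; ring
        · intro v hv
          rw [hx t v, le_div_iff₀ (hcR t v)]
          calc x 0 (σ l.succ) * ((N t v).card : ℝ)
              = ∑ _j ∈ N t v, x 0 (σ l.succ) := by
                rw [Finset.sum_const, nsmul_eq_mul]; ring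
            _ ≤ ∑ j ∈ N t v, x t j := by
                refine Finset.sum_le_sum fun j hj => ?_
                refine ihh j ?_
                intro hjlow
                exact hnc ⟨j, v, hjlow, hv, (hsym t v j).mp hj⟩
    have hdata : ∀ l : Fin n, ∃ (t : ℕ) (c u : Fin (n+1)),
        t < B ∧ u ∈ N t c ∧ c ∈ N t c ∧
        x t u ≤ x 0 (σ l.castSucc) ∧ x 0 (σ l.succ) ≤ x t c ∧
        ((σ.symm u : ℕ) ≤ (l : ℕ)) ∧ ((l : ℕ) < (σ.symm c : ℕ)) := by
      intro l
      obtain ⟨u, v, hu, hv, hmem⟩ := htfC l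
      refine ⟨tf l, v, u, htfB l, (hsym _ _ _).mp hmem, hself _ _, ?_, ?_, ?_, ?_⟩
      · exact (inv l (tf l) le_rfl).1 u hu
      · exact (inv l (tf l) le_rfl).2 v hv
      · simpa [hlow] using hu
      · simp only [hlow, not_le] at hv; exact hv
    choose tt cc uu htB humem hcmem huval hcval hulow hchigh using hdata
    have expand : ∑ t ∈ Finset.range B, W t
        = ∑ p ∈ Finset.range B ×ˢ (Finset.univ : Finset (Fin (n+1))),
            (1 / ((N p.1 p.2).card : ℝ)) * D p.1 p.2 := by
      rw [Finset.sum_product]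
    set F : Fin n → ℕ × Fin (n+1) := fun l => (tt l, cc l) with hF
    have hmaps : ∀ l ∈ (Finset.univ : Finset (Fin n)),
        F l ∈ Finset.range B ×ˢ (Finset.univ : Finset (Fin (n+1))) := by
      intro l _
      simp [hF, Finset.mem_product, Finset.mem_range, htB l]
    have hfib := Finset.sum_fiberwise_of_maps_to hmaps
      (fun l => (1/2) * (x 0 (σ l.succ) - x 0 (σ l.castSucc)) ^ 2)
    rw [expand, Finset.mul_sum, ← hfib]
    refine Finset.sum_le_sum fun p hp => ?_
    rcases (Finset.filter (fun l => F l = p) Finset.univ).eq_empty_or_nonempty with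
      hLe | hLne
    · rw [hLe]
      simp only [Finset.sum_empty]
      exact mul_nonneg (one_div_nonneg.mpr (Nat.cast_nonneg _)) (hDnn _ _)
    · set L := Finset.filter (fun l => F l = p) Finset.univ with hL
      set lm := L.min' hLne with hlm
      set lM := L.max' hLne with hlM
      have hlmL : lm ∈ L := L.min'_mem hLne
      have hlML : lM ∈ L := L.max'_mem hLne
      have hlmF : F lm = p := (Finset.mem_filter.mp hlmL).2
      have hlMF : F lM = p := (Finset.mem_filter.mp hlML).2
      obtain ⟨t0, c0⟩ := p
      have h1 : tt lm = t0 ∧ cc lm = c0 := by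
        simpa [hF, Prod.ext_iff] using hlmF
      have h2 : tt lM = t0 ∧ cc lM = c0 := by
        simpa [hF, Prod.ext_iff] using hlMF
      have hlmlM : (lm : ℕ) ≤ (lM : ℕ) := L.min'_le lM hlML
      have hune : uu lm ≠ c0 := by
        intro he
        have ha := hulow lm
        have hb := hchigh lM
        rw [h2.2] at hb
        rw [he] at ha
        omega
      have huS : uu lm ∈ N t0 c0 := by rw [← h1.1, ← h1.2]; exact humem lm
      have hcS : c0 ∈ N t0 c0 := by rw [← h1.1, ← h1.2]; exact hcmem lm
      have hkey := aux_two_point (N t0 c0) (x t0) huS hcS hune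
      have hgnn : ∀ l : Fin n, 0 ≤ x 0 (σ l.succ) - x 0 (σ l.castSucc) := by
        intro l
        have h := hσ (show l.castSucc ≤ l.succ from by
          rw [Fin.le_def]; simp [Fin.val_succ])
        simpa using sub_nonneg.mpr h
      have hsumg : ∑ l ∈ L, (x 0 (σ l.succ) - x 0 (σ l.castSucc))
          ≤ x 0 (σ lM.succ) - x 0 (σ lm.castSucc) := by
        have hsub : L ⊆ Finset.Icc lm lM := fun l hl =>
          Finset.mem_Icc.mpr ⟨L.min'_le l hl, L.le_max' l hl⟩
        calc ∑ l ∈ L, (x 0 (σ l.succ) - x 0 (σ l.castSucc))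
            ≤ ∑ l ∈ Finset.Icc lm lM, (x 0 (σ l.succ) - x 0 (σ l.castSucc)) :=
              Finset.sum_le_sum_of_subset_of_nonneg hsub (fun l _ _ => hgnn l)
          _ = x 0 (σ lM.succ) - x 0 (σ lm.castSucc) :=
              aux_telescope (fun k => x 0 (σ k)) lm lM hlmlM
      have hdiff : x 0 (σ lM.succ) - x 0 (σ lm.castSucc)
          ≤ x t0 c0 - x t0 (uu lm) := by
        have ha := huval lm
        have hb := hcval lM
        rw [h1.1] at ha
        rw [h2.1, h2.2] at hb
        linarith
      have hsum_nn : 0 ≤ ∑ l ∈ L, (x 0 (σ l.succ) - x 0 (σ l.castSucc)) :=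
        Finset.sum_nonneg fun l _ => hgnn l
      have hsq1 : ∑ l ∈ L, (x 0 (σ l.succ) - x 0 (σ l.castSucc)) ^ 2
          ≤ (∑ l ∈ L, (x 0 (σ l.succ) - x 0 (σ l.castSucc))) ^ 2 :=
        Finset.sum_sq_le_sq_sum_of_nonneg (fun l _ => hgnn l)
      have hsq2 : (∑ l ∈ L, (x 0 (σ l.succ) - x 0 (σ l.castSucc))) ^ 2
          ≤ (x t0 c0 - x t0 (uu lm)) ^ 2 :=
        pow_le_pow_left₀ hsum_nn (le_trans hsumg hdiff) 2
      calc ∑ l ∈ L, (1/2) * (x 0 (σ l.succ) - x 0 (σ l.castSucc)) ^ 2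
          = (1/2) * ∑ l ∈ L, (x 0 (σ l.succ) - x 0 (σ l.castSucc)) ^ 2 := by
            rw [Finset.mul_sum]
        _ ≤ (1/2) * (x t0 c0 - x t0 (uu lm)) ^ 2 := by linarith
        _ ≤ (1 / ((N t0 c0).card : ℝ)) * D t0 c0 := hkey
  linarith [main]
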